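/- Let p be an odd prime and k = p − 1. Consider the diagonal form F(x_1, …, x_{k²}) = ∑_{j=0}^{k−1} p^j ∑_{l=1}^{k} x_{jk+l}^k. Then the only solution of F(x) = 0 in ℤ_p^{k²} is x = 0. -/

import Mathlib

open Finset

lemma count_lemma (p : ℕ) [Fact p.Prime] (k : ℕ) (hk : k = p - 1) (hk0 : k ≠ 0)
    (a : Fin k → ZMod p) (h : ∑ l, a l ^ k = 0) : ∀ l, a l = 0 := by
  have hp : p.Prime := Fact.out
  have h2 : ∑ l, a l ^ k = ((univ.filter (fun l => a l ≠ 0)).card : ZMod p) := by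
    rw [Finset.card_filter]
    push_cast
    apply Finset.sum_congr rfl
    intro l _
    by_cases hl : a l = 0
    · simp [hl, zero_pow hk0]
    · rw [hk, ZMod.pow_card_sub_one_eq_one hl]; simp [hl]
  rw [h2] at h
  have hdvd : p ∣ (univ.filter (fun l => a l ≠ 0)).card :=
    (ZMod.natCast_eq_zero_iff _ _).mp h
  have hle : (univ.filter (fun l => a l ≠ 0)).card ≤ k :=
    (Finset.card_filter_le _ _).trans (by simp)
  have hlt : k < p := by omega
  have hzero : (univ.filter (fun l => a l ≠ 0)).card = 0 := by
    rcases Nat.eq_zero_or_pos (univ.filter (fun l => a l ≠ 0)).card with h0 | h0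
    · exact h0
    · exact absurd (Nat.le_of_dvd h0 hdvd) (by omega)
  intro l
  by_contra hne
  have : l ∈ univ.filter (fun l => a l ≠ 0) := by simp [hne]
  rw [Finset.card_eq_zero.mp hzero] at this
  exact absurd this (Finset.notMem_empty l)

lemma toZMod_zero_iff (p : ℕ) [Fact p.Prime] (z : ℤ_[p]) :
    PadicInt.toZMod z = 0 ↔ (p : ℤ_[p]) ∣ z := by
  rw [← RingHom.mem_ker, PadicInt.ker_toZMod, PadicInt.maximalIdeal_eq_span_p,
    Ideal.mem_span_singleton]

lemma keyA (p : ℕ) [Fact p.Prime] (hodd : Odd p) (k : ℕ) (hk : k = p - 1)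
    (x : Fin (k * k) → ℤ_[p])
    (hx : ∑ j : Fin k, (p : ℤ_[p]) ^ (j : ℕ) *
            ∑ l : Fin k, (x (finProdFinEquiv (j, l))) ^ k = 0) :
    ∀ i, (p : ℤ_[p]) ∣ x i := by
  have hp : p.Prime := Fact.out
  have hp3 : 3 ≤ p := by rcases hodd with ⟨m, rfl⟩; have := hp.two_le; omega
  have hk2 : 2 ≤ k := by omega
  have hp0 : (p : ℤ_[p]) ≠ 0 := Nat.cast_ne_zero.mpr hp.pos.ne'
  set S : Fin k → ℤ_[p] := fun j => ∑ l : Fin k, (x (finProdFinEquiv (j, l))) ^ k with hS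
  have H : ∀ m : ℕ, ∀ j : Fin k, (j : ℕ) < m → ∀ l, (p : ℤ_[p]) ∣ x (finProdFinEquiv (j, l)) := by
    intro m
    induction m with
    | zero => intro j hj; exact absurd hj (Nat.not_lt_zero _)
    | succ m ih =>
      intro j hj l
      by_cases hjm : (j : ℕ) < m
      · exact ih j hjm l
      · have hjm' : (j : ℕ) = m := by omega
        -- step: divisibility of S j
        have hsplit : (p : ℤ_[p]) ^ (j : ℕ) * S j =
            -∑ j' ∈ univ.erase j, (p : ℤ_[p]) ^ (j' : ℕ) * S j' := by
          have h1 := Finset.add_sum_erase univ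
            (fun j' : Fin k => (p : ℤ_[p]) ^ (j' : ℕ) * S j') (Finset.mem_univ j)
          rw [hx] at h1
          linear_combination h1
        have hdvd : (p : ℤ_[p]) ^ ((j : ℕ) + 1) ∣
            ∑ j' ∈ univ.erase j, (p : ℤ_[p]) ^ (j' : ℕ) * S j' := by
          apply Finset.dvd_sum
          intro j' hj'
          have hne : j' ≠ j := (Finset.mem_erase.mp hj').1
          rcases lt_or_gt_of_ne (fun h => hne (Fin.ext h) :
              (j' : ℕ) ≠ (j : ℕ)) with hlt | hgt
          · have hSd : (p : ℤ_[p]) ^ k ∣ S j' :=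
              Finset.dvd_sum fun l _ => pow_dvd_pow_of_dvd (ih j' (by omega) l) k
            exact dvd_mul_of_dvd_right
              ((pow_dvd_pow _ (by omega : (j : ℕ) + 1 ≤ k)).trans hSd) _
          · exact dvd_mul_of_dvd_left (pow_dvd_pow _ (by omega)) _
        have hdvd2 : (p : ℤ_[p]) ^ ((j : ℕ) + 1) ∣ (p : ℤ_[p]) ^ (j : ℕ) * S j := by
          rw [hsplit]; exact dvd_neg.mpr hdvd
        have hpS : (p : ℤ_[p]) ∣ S j := by
          have h2 : (p : ℤ_[p]) ^ (j : ℕ) * (p : ℤ_[p]) ∣ (p : ℤ_[p]) ^ (j : ℕ) * S j := by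
            rw [← pow_succ]; exact hdvd2
          exact (mul_dvd_mul_iff_left (pow_ne_zero _ hp0)).mp h2
        -- pass to ZMod p
        have hsum0 : ∑ l' : Fin k, (PadicInt.toZMod (x (finProdFinEquiv (j, l')))) ^ k = 0 := by
          have := (toZMod_zero_iff p (S j)).mpr hpS
          rw [hS] at this
          simp [map_sum, map_pow] at this
          exact this
        have := count_lemma p k hk (by omega)
          (fun l' => PadicInt.toZMod (x (finProdFinEquiv (j, l')))) hsum0 l
        exact (toZMod_zero_iff p _).mp this
  intro i
  have : i = finProdFinEquiv (finProdFinEquiv.symm i) := (Equiv.apply_symm_apply _ _).symm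
  rw [this]
  obtain ⟨j, l⟩ := finProdFinEquiv.symm i
  exact H ((j : ℕ) + 1) j (Nat.lt_succ_self _) l

lemma keyB (p : ℕ) [Fact p.Prime] (hodd : Odd p) (k : ℕ) (hk : k = p - 1) :
    ∀ n : ℕ, ∀ x : Fin (k * k) → ℤ_[p],
      (∑ j : Fin k, (p : ℤ_[p]) ^ (j : ℕ) *
          ∑ l : Fin k, (x (finProdFinEquiv (j, l))) ^ k = 0) →
      ∀ i, (p : ℤ_[p]) ^ n ∣ x i := by
  have hp : p.Prime := Fact.out
  have hp0 : (p : ℤ_[p]) ≠ 0 := Nat.cast_ne_zero.mpr hp.pos.ne'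
  intro n
  induction n with
  | zero => intro x _ i; simpa using one_dvd _
  | succ n ih =>
    intro x hx i
    have hA := keyA p hodd k hk x hx
    choose y hy using hA
    have hx2 : ∑ j : Fin k, (p : ℤ_[p]) ^ (j : ℕ) *
        ∑ l : Fin k, ((p : ℤ_[p]) * y (finProdFinEquiv (j, l))) ^ k = 0 := by
      rw [← hx]
      refine Finset.sum_congr rfl fun j _ => ?_
      congr 1
      exact Finset.sum_congr rfl fun l _ => by rw [← hy]
    have hx' : (p : ℤ_[p]) ^ k *
        (∑ j : Fin k, (p : ℤ_[p]) ^ (j : ℕ) *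
          ∑ l : Fin k, (y (finProdFinEquiv (j, l))) ^ k) = 0 := by
      rw [← hx2, Finset.mul_sum]
      refine Finset.sum_congr rfl fun j _ => ?_
      rw [Finset.mul_sum, Finset.mul_sum, Finset.mul_sum]
      exact Finset.sum_congr rfl fun l _ => by ring
    have hy0 : ∑ j : Fin k, (p : ℤ_[p]) ^ (j : ℕ) *
        ∑ l : Fin k, (y (finProdFinEquiv (j, l))) ^ k = 0 := by
      rcases mul_eq_zero.mp hx' with h | h
      · exact absurd h (pow_ne_zero _ hp0)
      · exact h
    have := ih y hy0 i
    rw [hy i, pow_succ']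
    exact mul_dvd_mul_left _ this

theorem stmt_19 (p : ℕ) [Fact p.Prime] (hodd : Odd p) (k : ℕ) (hk : k = p - 1)
    (x : Fin (k * k) → ℤ_[p])
    (hx : ∑ j : Fin k, (p : ℤ_[p]) ^ (j : ℕ) *
            ∑ l : Fin k, (x (finProdFinEquiv (j, l))) ^ k = 0) :
    x = 0 := by
  funext i
  by_contra hne
  have hd := keyB p hodd k hk
  have hval : ∀ n : ℕ, (n : ℤ) ≤ (x i).valuation := by
    intro n
    rw [Nat.cast_le, ← PadicInt.mem_span_pow_iff_le_valuation _ hne n, Ideal.mem_span_singleton]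
    exact hd n x hx i
  have h1 := hval ((x i).valuation + 1)
  have h2 := Nat.zero_le (x i).valuation
  omega
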